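/- Let G=(V,E) be a finite simple graph and U ⊆ V. Then opt_MaxExtVC(G,U) + opt_MinExtIS(G, V\U) = |V|. -/

import Mathlib

/-- `S` is a vertex cover of `G`: every edge has an endpoint in `S`. -/
def IsVertexCover {V : Type*} (G : SimpleGraph V) (S : Set V) : Prop :=
  ∀ ⦃u v : V⦄, G.Adj u v → u ∈ S ∨ v ∈ S

/-- `S` is a minimal vertex cover of `G`: no proper subset is a vertex cover. -/
def IsMinimalVertexCover {V : Type*} (G : SimpleGraph V) (S : Set V) : Prop :=
  IsVertexCover G S ∧ ∀ T : Set V, T ⊂ S → ¬ IsVertexCover G T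

/-- `S` is an independent set of `G`: pairwise non-adjacent vertices. -/
def IsIndepSet {V : Type*} (G : SimpleGraph V) (S : Set V) : Prop :=
  ∀ ⦃u v : V⦄, u ∈ S → v ∈ S → ¬ G.Adj u v

/-- `S` is a maximal independent set of `G`: no proper superset is independent. -/
def IsMaximalIndepSet {V : Type*} (G : SimpleGraph V) (S : Set V) : Prop :=
  IsIndepSet G S ∧ ∀ T : Set V, S ⊂ T → ¬ IsIndepSet G T

/-- `(G, U)` is a yes-instance of Ext VC: some minimal vertex cover contains `U`. -/
def ExtVC {V : Type*} (G : SimpleGraph V) (U : Set V) : Prop :=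
  ∃ S : Set V, U ⊆ S ∧ IsMinimalVertexCover G S

/-- `(G, U)` is a yes-instance of Ext IS: some maximal independent set is contained in `U`. -/
def ExtIS {V : Type*} (G : SimpleGraph V) (U : Set V) : Prop :=
  ∃ S : Set V, S ⊆ U ∧ IsMaximalIndepSet G S

/-- The closed neighborhood `N_G[U]` of a set `U` of vertices. -/
def closedNbhd {V : Type*} (G : SimpleGraph V) (U : Set V) : Set V :=
  U ∪ {v | ∃ u ∈ U, G.Adj u v}

/-- `S` is a dominating set of `G`: every vertex is in `S` or adjacent to a vertex of `S`. -/
def IsDominating {V : Type*} (G : SimpleGraph V) (S : Set V) : Prop :=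
  ∀ v : V, v ∈ S ∨ ∃ u ∈ S, G.Adj u v

/-- `opt_MaxExtVC(G, U)`: the maximum of `|S ∩ U|` over all minimal vertex covers `S` of `G`. -/
noncomputable def optMaxExtVC {V : Type*} (G : SimpleGraph V) (U : Set V) : ℕ :=
  sSup {n : ℕ | ∃ S : Set V, IsMinimalVertexCover G S ∧ n = (S ∩ U).ncard}

/-- `opt_MinExtIS(G, U)`: the minimum of `|U| + |S ∩ (V \ U)|` over all maximal independent
sets `S` of `G`. -/
noncomputable def optMinExtIS {V : Type*} (G : SimpleGraph V) (U : Set V) : ℕ :=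
  sInf {n : ℕ | ∃ S : Set V, IsMaximalIndepSet G S ∧ n = U.ncard + (S ∩ Uᶜ).ncard}


lemma cover_iff_compl_indep {V : Type*} (G : SimpleGraph V) (S : Set V) :
    IsVertexCover G S ↔ IsIndepSet G Sᶜ := by
  constructor
  · intro h u v hu hv hadj
    rcases h hadj with h' | h'
    exacts [hu h', hv h']
  · intro h u v hadj
    by_contra hc
    push_neg at hc
    exact h hc.1 hc.2 hadj

lemma minVC_iff_compl_maxIS {V : Type*} (G : SimpleGraph V) (S : Set V) :
    IsMinimalVertexCover G S ↔ IsMaximalIndepSet G Sᶜ := by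
  constructor
  · rintro ⟨hc, hmin⟩
    refine ⟨(cover_iff_compl_indep G S).1 hc, ?_⟩
    intro T hT hTind
    have h1 : Tᶜ ⊂ S := by
      have := compl_lt_compl_iff_lt.mpr hT
      rwa [compl_compl] at this
    exact hmin Tᶜ h1 ((cover_iff_compl_indep G Tᶜ).2 (by rwa [compl_compl]))
  · rintro ⟨hi, hmax⟩
    refine ⟨(cover_iff_compl_indep G S).2 hi, ?_⟩
    intro T hT hTc
    exact hmax Tᶜ (compl_lt_compl_iff_lt.mpr hT) ((cover_iff_compl_indep G T).1 hTc)

lemma exists_maxIS {V : Type*} [Fintype V] (G : SimpleGraph V) :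
    ∃ S : Set V, IsMaximalIndepSet G S := by
  obtain ⟨S, hS, hmax⟩ := Set.Finite.exists_maximalFor (id : Set V → Set V)
    {S | IsIndepSet G S} (Set.toFinite _)
    ⟨∅, by intro u v hu _ _; exact absurd hu (Set.notMem_empty u)⟩
  refine ⟨S, hS, ?_⟩
  intro T hT hTind
  exact hT.not_ge (hmax hTind hT.le)

lemma card_split {V : Type*} [Fintype V] (S U : Set V) :
    (S ∩ U).ncard + (Sᶜ ∩ U).ncard = U.ncard := by
  rw [Set.inter_comm S U, Set.inter_comm Sᶜ U, ← Set.diff_eq]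
  exact Set.ncard_inter_add_ncard_diff_eq_ncard U S (Set.toFinite _)

/-- `opt_MaxExtVC(G, U) + opt_MinExtIS(G, V \ U) = |V|`. -/
theorem statement_10 {V : Type*} [Fintype V] (G : SimpleGraph V) (U : Set V) :
    optMaxExtVC G U + optMinExtIS G Uᶜ = Fintype.card V := by
  classical
  set A := {n : ℕ | ∃ S : Set V, IsMinimalVertexCover G S ∧ n = (S ∩ U).ncard} with hA
  set B := {n : ℕ | ∃ S : Set V, IsMaximalIndepSet G S ∧ n = Uᶜ.ncard + (S ∩ U).ncard} with hB
  have hBdef : optMinExtIS G Uᶜ = sInf B := by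
    unfold optMinExtIS
    rw [compl_compl]
  have cardV : U.ncard + Uᶜ.ncard = Fintype.card V := by
    rw [Set.ncard_add_ncard_compl, Nat.card_eq_fintype_card]
  have key : ∀ S : Set V, (S ∩ U).ncard + (Uᶜ.ncard + (Sᶜ ∩ U).ncard) = Fintype.card V := by
    intro S
    have h1 := card_split S U
    omega
  have hAne : A.Nonempty := by
    obtain ⟨T, hT⟩ := exists_maxIS G
    exact ⟨(Tᶜ ∩ U).ncard, Tᶜ, (minVC_iff_compl_maxIS G Tᶜ).2 (by rwa [compl_compl]), rfl⟩
  have hAbdd : ∀ n ∈ A, n ≤ Fintype.card V := by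
    rintro n ⟨S, _, rfl⟩
    calc (S ∩ U).ncard ≤ (Set.univ : Set V).ncard :=
          Set.ncard_le_ncard (Set.subset_univ _) (Set.toFinite _)
      _ = Fintype.card V := by rw [Set.ncard_univ, Nat.card_eq_fintype_card]
  have hM : sSup A ∈ A := Nat.sSup_mem hAne ⟨Fintype.card V, hAbdd⟩
  obtain ⟨S₀, hS₀, hS₀c⟩ := hM
  have hBeq : B = (fun m => Fintype.card V - m) '' A := by
    ext n
    constructor
    · rintro ⟨T, hT, rfl⟩
      refine ⟨(Tᶜ ∩ U).ncard, ⟨Tᶜ, (minVC_iff_compl_maxIS G Tᶜ).2 (by rwa [compl_compl]),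
        rfl⟩, ?_⟩
      have h := key Tᶜ
      rw [compl_compl] at h
      show Fintype.card V - (Tᶜ ∩ U).ncard = Uᶜ.ncard + (T ∩ U).ncard
      omega
    · rintro ⟨m, ⟨S, hS, rfl⟩, rfl⟩
      refine ⟨Sᶜ, (minVC_iff_compl_maxIS G S).1 hS, ?_⟩
      have h := key S
      show Fintype.card V - (S ∩ U).ncard = Uᶜ.ncard + (Sᶜ ∩ U).ncard
      omega
  have hInf : sInf B = Fintype.card V - sSup A := by
    apply le_antisymm
    · rw [hBeq]
      exact Nat.sInf_le ⟨sSup A, ⟨S₀, hS₀, hS₀c⟩, rfl⟩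
    · apply le_csInf
      · rw [hBeq]
        exact ⟨_, ⟨sSup A, ⟨S₀, hS₀, hS₀c⟩, rfl⟩⟩
      · rintro n hn
        rw [hBeq] at hn
        obtain ⟨m, hm, rfl⟩ := hn
        exact Nat.sub_le_sub_left (le_csSup ⟨Fintype.card V, hAbdd⟩ hm) _
  have hMle : sSup A ≤ Fintype.card V := hAbdd _ ⟨S₀, hS₀, hS₀c⟩
  show sSup A + optMinExtIS G Uᶜ = Fintype.card V
  rw [hBdef, hInf]
  omega
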